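/- arXiv:1809.08782 — 5 statements merged into one kernel-verified Lean document; each statement's English description precedes it below -/
import Mathlib

section
/- Let d be a positive integer, m a positive integer, U > 0 a real number, x ∈ ℝ^d, and q ∈ ℝ^d with ‖q‖ = 1. Define P(x) ∈ ℝ^{d+m} as the concatenation of Ux with the m scalars ‖Ux‖^{2^1}, ‖Ux‖^{2^2}, …, ‖Ux‖^{2^m}, and Q(q) ∈ ℝ^{d+m} as the concatenation of q with m copies of the scalar 1/2. Then ‖P(x) − Q(q)‖² = 1 + m/4 − 2U⟨x, q⟩ + ‖Ux‖^{2^{m+1}}. -/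
/-- L2-ALSH asymmetric transformation: with `P(x) = [Ux; ‖Ux‖^2; …; ‖Ux‖^{2^m}]` and
`Q(q) = [q; 1/2; …; 1/2]`, one has `‖P(x) - Q(q)‖² = 1 + m/4 - 2U⟨x,q⟩ + ‖Ux‖^{2^{m+1}}`. -/
theorem l2_alsh_transform (d m : ℕ) (hd : 0 < d) (hm : 0 < m) (U : ℝ) (hU : 0 < U)
    (x q : EuclideanSpace ℝ (Fin d)) (hq : ‖q‖ = 1)
    (P : EuclideanSpace ℝ (Fin (d + m)))
    (hP : P = Fin.append ((U • x : EuclideanSpace ℝ (Fin d)) : Fin d → ℝ)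
      (fun k : Fin m => ‖U • x‖ ^ (2 ^ ((k : ℕ) + 1))))
    (Q : EuclideanSpace ℝ (Fin (d + m)))
    (hQ : Q = Fin.append ((q : EuclideanSpace ℝ (Fin d)) : Fin d → ℝ)
      (fun _ : Fin m => (1 / 2 : ℝ))) :
    ‖P - Q‖ ^ 2 = 1 + (m : ℝ) / 4 - 2 * U * (inner ℝ x q : ℝ) + ‖U • x‖ ^ (2 ^ (m + 1)) := by
  set a := ‖U • x‖ with ha
  have h2 : ‖P - Q‖ ^ 2 = ∑ i, ((P : Fin (d+m) → ℝ) i - (Q : Fin (d+m) → ℝ) i) ^ 2 := by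
    rw [EuclideanSpace.norm_eq, Real.sq_sqrt (Finset.sum_nonneg fun i _ => sq_nonneg _)]
    simp [Real.norm_eq_abs, sq_abs]
  have hfirst : ∑ i : Fin d, (((U • x : EuclideanSpace ℝ (Fin d)) : Fin d → ℝ) i
      - (q : Fin d → ℝ) i) ^ 2 = a ^ 2 - 2 * U * (inner ℝ x q : ℝ) + 1 := by
    have : ∑ i : Fin d, (((U • x : EuclideanSpace ℝ (Fin d)) : Fin d → ℝ) i
        - (q : Fin d → ℝ) i) ^ 2 = ‖(U • x : EuclideanSpace ℝ (Fin d)) - q‖ ^ 2 := by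
      rw [EuclideanSpace.norm_eq, Real.sq_sqrt (Finset.sum_nonneg fun i _ => sq_nonneg _)]
      simp [Real.norm_eq_abs, sq_abs]
    rw [this, norm_sub_sq_real, real_inner_smul_left, hq]
    ring
  have hsecond : ∑ k : Fin m, (a ^ (2 ^ ((k : ℕ) + 1)) - 1/2) ^ 2
      = a ^ (2 ^ (m + 1)) - a ^ 2 + (m : ℝ) / 4 := by
    have hterm : ∀ k : ℕ, (a ^ (2 ^ (k + 1)) - 1/2) ^ 2
        = (a ^ (2 ^ (k + 2)) - a ^ (2 ^ (k + 1))) + 1/4 := by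
      intro k
      have : a ^ (2 ^ (k + 2)) = (a ^ (2 ^ (k + 1))) ^ 2 := by
        rw [← pow_mul]; ring_nf
      rw [this]; ring
    rw [Fin.sum_univ_eq_sum_range (fun k => (a ^ 2 ^ (k + 1) - 1/2) ^ 2) m]
    simp only [hterm]
    rw [Finset.sum_add_distrib, Finset.sum_const, Finset.card_range]
    have htel : ∑ k ∈ Finset.range m, (a ^ (2 ^ (k + 2)) - a ^ (2 ^ (k + 1)))
        = a ^ (2 ^ (m + 1)) - a ^ 2 := by
      have := Finset.sum_range_sub (fun k => a ^ (2 ^ (k + 1))) m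
      simpa using this
    rw [htel]
    ring
  rw [h2, hP, hQ, Fin.sum_univ_add]
  simp only [Fin.append_left, Fin.append_right]
  rw [hfirst, hsecond]
  ring
end

section
/- Fix a real number c with 0 < c < 1. The function S ↦ G(c, S) = log(1 − arccos(S)/π) / log(1 − arccos(cS)/π) is strictly decreasing on the interval (0, 1): for all 0 < S₁ < S₂ < 1, G(c, S₂) < G(c, S₁). -/
open Real Set

/-- The SIMPLE-LSH query-time exponent `ρ = G(c, S)`. -/
noncomputable def G (c S : ℝ) : ℝ :=
  Real.log (1 - Real.arccos S / Real.pi) / Real.log (1 - Real.arccos (c * S) / Real.pi)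

/-- Auxiliary function: `h x = -log (1 - arccos x / π)`. -/
noncomputable def simpleH (x : ℝ) : ℝ := -Real.log (1 - Real.arccos x / Real.pi)

lemma frac_mem (x : ℝ) (hx : x ∈ Ioo (0:ℝ) 1) :
    Real.arccos x / π ∈ Ioo (0:ℝ) (1/2) := by
  constructor
  · exact div_pos (Real.arccos_pos.2 hx.2) Real.pi_pos
  · rw [div_lt_iff₀ Real.pi_pos]
    have := Real.arccos_lt_pi_div_two.2 hx.1
    linarith

lemma base_mem (x : ℝ) (hx : x ∈ Ioo (0:ℝ) 1) :
    1 - Real.arccos x / π ∈ Ioo (1/2 : ℝ) 1 := by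
  have := frac_mem x hx
  constructor <;> [linarith [this.2]; linarith [this.1]]

lemma simpleH_pos (x : ℝ) (hx : x ∈ Ioo (0:ℝ) 1) : 0 < simpleH x := by
  have hb := base_mem x hx
  have : Real.log (1 - Real.arccos x / π) < 0 :=
    Real.log_neg (by linarith [hb.1]) hb.2
  simpa [simpleH] using this

lemma simpleH_lt_one (x : ℝ) (hx : x ∈ Ioo (0:ℝ) 1) : simpleH x < 1 := by
  have hb := base_mem x hx
  have h2 : Real.log (1 - Real.arccos x / π) > Real.log (1/2) :=
    Real.log_lt_log (by norm_num) hb.1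
  have hl2 : Real.log (1/2) = -Real.log 2 := by
    rw [Real.log_div one_ne_zero two_ne_zero, Real.log_one]; ring
  have := Real.log_two_lt_d9
  simp only [simpleH]
  rw [hl2] at h2
  linarith

lemma sqrt_pos_of_mem (x : ℝ) (hx : x ∈ Ioo (0:ℝ) 1) : 0 < Real.sqrt (1 - x^2) := by
  apply Real.sqrt_pos.2; nlinarith [hx.1, hx.2]

lemma hasDerivAt_simpleH (x : ℝ) (hx : x ∈ Ioo (0:ℝ) 1) :
    HasDerivAt simpleH (-(1/(π * Real.sqrt (1-x^2) * (1 - Real.arccos x / π)))) x := by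
  have hb := base_mem x hx
  have h1 : HasDerivAt Real.arccos (-(1/Real.sqrt (1-x^2))) x :=
    Real.hasDerivAt_arccos (by nlinarith [hx.1, hx.2]) (ne_of_lt hx.2)
  have h2 : HasDerivAt (fun y => 1 - Real.arccos y / π) (1/(π * Real.sqrt (1-x^2))) x := by
    have := (h1.div_const π).const_sub 1
    refine this.congr_deriv ?_
    rw [mul_comm]
    ring
  have h3 := (h2.log (by linarith [hb.1])).neg
  refine h3.congr_deriv ?_
  have hs := sqrt_pos_of_mem x hx
  have hp := Real.pi_pos
  field_simp

lemma mul_log_strict (u v : ℝ) (hu : 1/2 ≤ u) (huv : u < v) (hv : v ≤ 1) :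
    u * Real.log u < v * Real.log v := by
  have key : StrictMonoOn (fun x : ℝ => x * Real.log x) (Icc (1/2 : ℝ) 1) := by
    apply strictMonoOn_of_deriv_pos (convex_Icc _ _)
    · apply ContinuousOn.mul continuousOn_id
      apply Real.continuousOn_log.mono
      intro x hx
      simp only [mem_compl_iff, mem_singleton_iff]
      have := hx.1
      intro h; rw [h] at this; norm_num at this
    · intro x hx
      rw [interior_Icc] at hx
      rw [(Real.hasDerivAt_mul_log (by linarith [hx.1] : x ≠ 0)).deriv]
      have h2 : Real.log (1/2) < Real.log x := Real.log_lt_log (by norm_num) hx.1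
      have hl2 : Real.log (1/2) = -Real.log 2 := by
        rw [Real.log_div one_ne_zero two_ne_zero, Real.log_one]; ring
      have := Real.log_two_lt_d9
      rw [hl2] at h2
      linarith
  exact key ⟨hu, by linarith⟩ ⟨by linarith, hv⟩ huv

/-- The key inequality: the "weighted slope" comparison. -/
lemma key_ineq (c : ℝ) (hc0 : 0 < c) (hc1 : c < 1) (S : ℝ) (hS : S ∈ Ioo (0:ℝ) 1) :
    c * (Real.sqrt (1 - S^2) * ((1 - Real.arccos S / π) * simpleH S)) <
      Real.sqrt (1 - (c*S)^2) * ((1 - Real.arccos (c*S) / π) * simpleH (c*S)) := by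
  have hcS : c * S ∈ Ioo (0:ℝ) 1 := ⟨mul_pos hc0 hS.1, by nlinarith [hS.1, hS.2]⟩
  have hb := base_mem S hS
  have hbc := base_mem (c*S) hcS
  -- arccos comparison
  have harc : Real.arccos S < Real.arccos (c * S) := by
    apply Real.strictAntiOn_arccos ⟨by linarith [hcS.1], le_of_lt hcS.2⟩
      ⟨by linarith [hS.1], le_of_lt hS.2⟩
    nlinarith [hS.1]
  -- mul log part: set v = 1 - arccos S / π, u = 1 - arccos (c S)/π, u < v
  set v := 1 - Real.arccos S / π with hv
  set u := 1 - Real.arccos (c*S) / π with hu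
  have huv : u < v := by
    have hp := Real.pi_pos
    have : Real.arccos S / π < Real.arccos (c*S) / π :=
      div_lt_div_of_pos_right harc hp
    simp only [hu, hv]
    linarith
  -- second factor comparison
  have hfac2 : v * simpleH S < u * simpleH (c*S) := by
    have h1 : u * Real.log u < v * Real.log v :=
      mul_log_strict u v (le_of_lt hbc.1) huv (le_of_lt hb.2)
    have e1 : simpleH S = -Real.log v := rfl
    have e2 : simpleH (c*S) = -Real.log u := rfl
    rw [e1, e2]
    linarith
  -- first factor comparison
  have hfac1 : c * Real.sqrt (1 - S^2) < Real.sqrt (1 - (c*S)^2) := by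
    have e1 : c * Real.sqrt (1 - S^2) = Real.sqrt (c^2 * (1 - S^2)) := by
      rw [Real.sqrt_mul (sq_nonneg c), Real.sqrt_sq hc0.le]
    rw [e1]
    have hc2 : c^2 < 1 := by nlinarith
    have h1S : 0 < 1 - S^2 := by nlinarith [hS.1, hS.2]
    apply Real.sqrt_lt_sqrt (by positivity)
    nlinarith
  -- combine
  have hA : 0 ≤ c * Real.sqrt (1 - S^2) :=
    mul_nonneg hc0.le (Real.sqrt_nonneg _)
  have hB : 0 ≤ v * simpleH S :=
    mul_nonneg (le_of_lt (lt_trans one_half_pos hb.1)) (simpleH_pos S hS).le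
  calc c * (Real.sqrt (1 - S^2) * (v * simpleH S))
      = (c * Real.sqrt (1 - S^2)) * (v * simpleH S) := by ring
    _ < Real.sqrt (1 - (c*S)^2) * (u * simpleH (c*S)) :=
        mul_lt_mul'' hfac1 hfac2 hA hB

lemma hasDerivAt_phi (c : ℝ) (hc0 : 0 < c) (hc1 : c < 1) (S : ℝ) (hS : S ∈ Ioo (0:ℝ) 1) :
    HasDerivAt (fun S => Real.log (simpleH S) - Real.log (simpleH (c*S)))
      ((-(1/(π * Real.sqrt (1-S^2) * (1 - Real.arccos S / π)))) / simpleH S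
        - (-(1/(π * Real.sqrt (1-(c*S)^2) * (1 - Real.arccos (c*S) / π)))) * c / simpleH (c*S))
      S := by
  have hcS : c * S ∈ Ioo (0:ℝ) 1 := ⟨mul_pos hc0 hS.1, by nlinarith [hS.1, hS.2]⟩
  have h1 := (hasDerivAt_simpleH S hS).log (ne_of_gt (simpleH_pos S hS))
  have hlin : HasDerivAt (fun S : ℝ => c * S) c S := by
    simpa using (hasDerivAt_id S).const_mul c
  have h2 := ((hasDerivAt_simpleH (c*S) hcS).log
    (ne_of_gt (simpleH_pos (c*S) hcS))).comp S hlin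
  have := h1.sub h2
  refine this.congr_deriv ?_
  ring

lemma phi_deriv_neg (c : ℝ) (hc0 : 0 < c) (hc1 : c < 1) (S : ℝ) (hS : S ∈ Ioo (0:ℝ) 1) :
    ((-(1/(π * Real.sqrt (1-S^2) * (1 - Real.arccos S / π)))) / simpleH S
      - (-(1/(π * Real.sqrt (1-(c*S)^2) * (1 - Real.arccos (c*S) / π)))) * c / simpleH (c*S)) < 0 := by
  have hcS : c * S ∈ Ioo (0:ℝ) 1 := ⟨mul_pos hc0 hS.1, by nlinarith [hS.1, hS.2]⟩
  have hb := base_mem S hS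
  have hbc := base_mem (c*S) hcS
  have hv : (0:ℝ) < 1 - Real.arccos S / π := lt_trans one_half_pos hb.1
  have hu : (0:ℝ) < 1 - Real.arccos (c*S) / π := lt_trans one_half_pos hbc.1
  have hs1 := sqrt_pos_of_mem S hS
  have hs2 := sqrt_pos_of_mem (c*S) hcS
  have hh1 := simpleH_pos S hS
  have hh2 := simpleH_pos (c*S) hcS
  have hp := Real.pi_pos
  have key := key_ineq c hc0 hc1 S hS
  rw [sub_neg, div_lt_div_iff₀ (by positivity) (by positivity)]
  rw [neg_mul, neg_mul, neg_mul, neg_lt_neg_iff]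
  have e1 : 1 / (π * Real.sqrt (1-(c*S)^2) * (1 - Real.arccos (c*S) / π)) * c * simpleH S
      = (c * simpleH S) / (π * Real.sqrt (1-(c*S)^2) * (1 - Real.arccos (c*S) / π)) := by ring
  have e2 : 1 / (π * Real.sqrt (1-S^2) * (1 - Real.arccos S / π)) * simpleH (c*S)
      = simpleH (c*S) / (π * Real.sqrt (1-S^2) * (1 - Real.arccos S / π)) := by ring
  rw [e1, e2, div_lt_div_iff₀ (by positivity) (by positivity)]
  nlinarith [key, hp]

/-- For fixed `0 < c < 1`, the exponent `S ↦ G(c, S)` is strictly decreasing on `(0, 1)`. -/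
theorem G_strictAnti (c : ℝ) (hc0 : 0 < c) (hc1 : c < 1) :
    ∀ S₁ S₂ : ℝ, 0 < S₁ → S₁ < S₂ → S₂ < 1 → G c S₂ < G c S₁ := by
  intro S₁ S₂ h1 h12 h21
  set Φ : ℝ → ℝ := fun S => Real.log (simpleH S) - Real.log (simpleH (c*S)) with hΦ
  have hanti : StrictAntiOn Φ (Ioo (0:ℝ) 1) := by
    apply strictAntiOn_of_deriv_neg (convex_Ioo 0 1)
    · intro x hx
      exact (hasDerivAt_phi c hc0 hc1 x hx).continuousAt.continuousWithinAt
    · intro x hx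
      rw [interior_Ioo] at hx
      rw [(hasDerivAt_phi c hc0 hc1 x hx).deriv]
      exact phi_deriv_neg c hc0 hc1 x hx
  have hmem1 : S₁ ∈ Ioo (0:ℝ) 1 := ⟨h1, lt_trans h12 h21⟩
  have hmem2 : S₂ ∈ Ioo (0:ℝ) 1 := ⟨lt_trans h1 h12, h21⟩
  have hlt := hanti hmem1 hmem2 h12
  have hG : ∀ S ∈ Ioo (0:ℝ) 1, G c S = Real.exp (Φ S) := by
    intro S hS
    have hcS : c * S ∈ Ioo (0:ℝ) 1 := ⟨mul_pos hc0 hS.1, by nlinarith [hS.1, hS.2]⟩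
    have hh1 := simpleH_pos S hS
    have hh2 := simpleH_pos (c*S) hcS
    have e : G c S = simpleH S / simpleH (c*S) := by
      simp only [G, simpleH]
      rw [neg_div_neg_eq]
    rw [e, hΦ, Real.exp_sub, Real.exp_log hh1, Real.exp_log hh2]
  rw [hG S₁ hmem1, hG S₂ hmem2]
  exact Real.exp_lt_exp.2 hlt
end

section
/- Let c, S₀, U_j, U be real numbers with 0 < c < 1 and 0 < S₀ < U_j < U. Then G(c, S₀/U_j) < G(c, S₀/U); that is, normalizing by the smaller local maximum 2-norm U_j yields a strictly smaller query-time exponent ρ_j = G(c, S₀/U_j) than the exponent ρ = G(c, S₀/U) obtained by normalizing with the global maximum 2-norm U. -/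
open Real Set

/-- `b ↦ -(b * log b)` is strictly antitone on `[1/2, 1]`. -/
lemma negMulLog_strictAntiOn : StrictAntiOn (fun b : ℝ => -(b * Real.log b)) (Icc (1/2 : ℝ) 1) := by
  apply strictAntiOn_of_deriv_neg (convex_Icc _ _) (Real.continuous_mul_log.neg.continuousOn)
  intro b hb
  rw [interior_Icc] at hb
  have hb0 : (0:ℝ) < b := lt_trans (by norm_num) hb.1
  have hd : HasDerivAt (fun b : ℝ => -(b * Real.log b)) (-(Real.log b + 1)) b :=
    (Real.hasDerivAt_mul_log hb0.ne').neg
  rw [show (-fun x : ℝ => x * Real.log x) = (fun b : ℝ => -(b * Real.log b)) from rfl, hd.deriv]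
  have h1 : Real.log (1/2) < Real.log b := Real.log_lt_log (by norm_num) hb.1
  have h2 : Real.log (1/2) = -Real.log 2 := by rw [one_div, Real.log_inv]
  have h3 : Real.log 2 < 1 := by have := Real.log_two_lt_d9; linarith
  linarith

lemma arccos_lt_arccos' {u x : ℝ} (hu : -1 ≤ u) (hux : u < x) (hx : x ≤ 1) :
    Real.arccos x < Real.arccos u :=
  Real.strictAntiOn_arccos ⟨hu, le_trans hux.le hx⟩ ⟨le_trans hu hux.le, hx⟩ hux

/-- Pure algebra: sign of the numerator of the derivative of `G c`. -/
lemma num_neg (pi c A B P Q LP LQ : ℝ) (hpi : 0 < pi) (hc0 : 0 < c) (hc1 : c < 1)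
    (hA : 0 < A) (hAB : A < B) (hP0 : 0 < P) (hQ0 : 0 < Q) (hLP : LP < 0) (hLQ : LQ < 0)
    (hkey : P * (-LP) < Q * (-LQ)) :
    (1 / A / pi / P) * LQ - LP * ((1 / B / pi / Q) * c) < 0 := by
  have hB : 0 < B := hA.trans hAB
  have hcAB : c * A < B := by nlinarith
  have h1 : c * A * (P * (-LP)) < B * (Q * (-LQ)) := by
    calc c * A * (P * (-LP)) < c * A * (Q * (-LQ)) :=
          mul_lt_mul_of_pos_left hkey (mul_pos hc0 hA)
      _ < B * (Q * (-LQ)) := mul_lt_mul_of_pos_right hcAB (mul_pos hQ0 (by linarith))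
  have heq : (1 / A / pi / P) * LQ - LP * ((1 / B / pi / Q) * c)
      = ((-LP) * c) / (B * pi * Q) - (-LQ) / (A * pi * P) := by
    field_simp
    ring
  rw [heq, sub_neg]
  rw [div_lt_div_iff₀ (by positivity) (by positivity)]
  nlinarith [mul_lt_mul_of_pos_right h1 hpi]

/-- For `0 < x < 1`, `G c ·` has a negative derivative at `x`. -/
lemma G_hasDerivAt_neg {c x : ℝ} (hc0 : 0 < c) (hc1 : c < 1) (hx0 : 0 < x) (hx1 : x < 1) :
    ∃ d, HasDerivAt (fun s => G c s) d x ∧ d < 0 := by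
  have hpi : (0:ℝ) < π := Real.pi_pos
  have fact : ∀ y : ℝ, 0 < y → y < 1 →
      (0 < Real.sqrt (1 - y^2) ∧ 1/2 < 1 - Real.arccos y / π ∧ 1 - Real.arccos y / π < 1) := by
    intro y hy0 hy1
    have hsq : 0 < 1 - y^2 := by nlinarith
    refine ⟨Real.sqrt_pos.mpr hsq, ?_, ?_⟩
    · have h := Real.arccos_lt_pi_div_two.mpr hy0
      have h' : Real.arccos y / π < 1/2 := by rw [div_lt_iff₀ hpi]; linarith
      linarith
    · have h := Real.arccos_pos.mpr hy1
      have : 0 < Real.arccos y / π := div_pos h hpi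
      linarith
  have hcx0 : 0 < c * x := mul_pos hc0 hx0
  have hcxx : c * x < x := by nlinarith
  have hcx1 : c * x < 1 := lt_trans hcxx hx1
  obtain ⟨hA, hP2, hP1⟩ := fact x hx0 hx1
  obtain ⟨hB, hQ2, hQ1⟩ := fact (c*x) hcx0 hcx1
  have hP0 : (0:ℝ) < 1 - Real.arccos x / π := by linarith
  have hQ0 : (0:ℝ) < 1 - Real.arccos (c*x) / π := by linarith
  have hfx : Real.log (1 - Real.arccos x / π) < 0 := Real.log_neg hP0 hP1
  have hfcx : Real.log (1 - Real.arccos (c*x) / π) < 0 := Real.log_neg hQ0 hQ1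
  -- derivative of s ↦ log (1 - arccos s / π) at a point y ∈ (0,1)
  have hDer : ∀ y : ℝ, 0 < y → y < 1 →
      HasDerivAt (fun s => Real.log (1 - Real.arccos s / π))
        (1 / Real.sqrt (1 - y^2) / π / (1 - Real.arccos y / π)) y := by
    intro y hy0 hy1
    obtain ⟨hs, h2, h1⟩ := fact y hy0 hy1
    have hy1' : y ≠ 1 := ne_of_lt hy1
    have hym1 : y ≠ -1 := by linarith
    have h := ((Real.hasDerivAt_arccos hym1 hy1').div_const π).const_sub 1
    have h'' := h.log (by linarith : (1:ℝ) - Real.arccos y / π ≠ 0)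
    convert h'' using 1
    field_simp
  have hderx := hDer x hx0 hx1
  have hdercx := hDer (c*x) hcx0 hcx1
  have hinner : HasDerivAt (fun s : ℝ => c * s) c x := by
    simpa using (hasDerivAt_id x).const_mul c
  have hcomp : HasDerivAt (fun s => Real.log (1 - Real.arccos (c*s) / π))
      ((1 / Real.sqrt (1 - (c*x)^2) / π / (1 - Real.arccos (c*x) / π)) * c) x :=
    HasDerivAt.comp x hdercx hinner
  have hF : HasDerivAt (fun s => G c s)
      (((1 / Real.sqrt (1 - x^2) / π / (1 - Real.arccos x / π)) * Real.log (1 - Real.arccos (c*x) / π)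
          - Real.log (1 - Real.arccos x / π)
            * ((1 / Real.sqrt (1 - (c*x)^2) / π / (1 - Real.arccos (c*x) / π)) * c))
        / (Real.log (1 - Real.arccos (c*x) / π))^2) x :=
    hderx.div hcomp (ne_of_lt hfcx)
  refine ⟨_, hF, div_neg_of_neg_of_pos ?_ ?_⟩
  · -- numerator < 0 via num_neg
    apply num_neg π c _ _ _ _ _ _ hpi hc0 hc1 hA ?_ hP0 hQ0 hfx hfcx ?_
    · -- √(1 - x²) < √(1 - (cx)²)
      apply Real.sqrt_lt_sqrt (by nlinarith)
      nlinarith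
    · -- P * (-log P) < Q * (-log Q)
      have hQP : 1 - Real.arccos (c*x) / π < 1 - Real.arccos x / π := by
        have harc : Real.arccos x < Real.arccos (c*x) :=
          arccos_lt_arccos' (by linarith) hcxx (le_of_lt hx1)
        have h2 : Real.arccos x / π < Real.arccos (c*x) / π := by gcongr
        linarith
      have hmem1 : (1 - Real.arccos (c*x) / π) ∈ Icc (1/2 : ℝ) 1 := ⟨by linarith, by linarith⟩
      have hmem2 : (1 - Real.arccos x / π) ∈ Icc (1/2 : ℝ) 1 := ⟨by linarith, by linarith⟩
      have := negMulLog_strictAntiOn hmem1 hmem2 hQP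
      simp only at this
      nlinarith [this]
  · have h2 : Real.log (1 - Real.arccos (c*x) / π) ^ 2 ≠ 0 :=
      pow_ne_zero 2 (ne_of_lt hfcx)
    exact lt_of_le_of_ne (sq_nonneg _) (Ne.symm h2)

/-- Normalizing by a smaller local maximum 2-norm `U_j < U` yields a strictly smaller
query-time exponent: `G(c, S₀/U_j) < G(c, S₀/U)`. -/
theorem rangeLSH_smaller_rho (c S₀ Uj U : ℝ) (hc0 : 0 < c) (hc1 : c < 1)
    (hS0 : 0 < S₀) (hSU : S₀ < Uj) (hUjU : Uj < U) :
    G c (S₀ / Uj) < G c (S₀ / U) := by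
  have hUj : 0 < Uj := lt_trans hS0 hSU
  have hU : 0 < U := lt_trans hUj hUjU
  have ha0 : 0 < S₀ / U := div_pos hS0 hU
  have hab : S₀ / U < S₀ / Uj := div_lt_div_of_pos_left hS0 hUj hUjU
  have hb1 : S₀ / Uj < 1 := (div_lt_one hUj).mpr hSU
  have hanti : StrictAntiOn (fun s => G c s) (Icc (S₀ / U) (S₀ / Uj)) := by
    apply strictAntiOn_of_deriv_neg (convex_Icc _ _)
    · intro x hx
      obtain ⟨d, hd, _⟩ := G_hasDerivAt_neg hc0 hc1 (lt_of_lt_of_le ha0 hx.1)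
        (lt_of_le_of_lt hx.2 hb1)
      exact hd.continuousAt.continuousWithinAt
    · intro x hx
      rw [interior_Icc] at hx
      obtain ⟨d, hd, hneg⟩ := G_hasDerivAt_neg hc0 hc1 (lt_trans ha0 hx.1)
        (lt_trans hx.2 hb1)
      rw [hd.deriv]
      exact hneg
  exact hanti ⟨le_rfl, hab.le⟩ ⟨hab.le, le_rfl⟩ hab
end

section
/- (Theorem 1, analytic form.) Let ρ, ρ*, α, β be real numbers with 0 < ρ* < ρ < 1, 0 < α < min{ρ, (ρ − ρ*)/(1 − ρ*)}, and 0 < β < αρ. For each integer n ≥ 2, let J_n be a finite index set with |J_n| ≤ n^α and let (ρ_j^{(n)})_{j∈J_n} be real numbers with 0 ≤ ρ_j^{(n)} ≤ ρ for all j, such that the number of indices j ∈ J_n with ρ_j^{(n)} > ρ* is at most n^β. Define f(n) = n^α + (∑_{j∈J_n} n^{(1−α)ρ_j^{(n)}})·log n. Then f(n)/(n^ρ log n) → 0 as n → ∞. -/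
open Filter

lemma rangeLSH_aux_rpow_tendsto (c : ℝ) (hc : c < 0) :
    Tendsto (fun n : ℕ => (n : ℝ) ^ c) atTop (nhds 0) := by
  have h := (tendsto_rpow_neg_atTop (show (0:ℝ) < -c by linarith)).comp
    (tendsto_natCast_atTop_atTop (R := ℝ))
  simpa [Function.comp_def] using h

/-- Theorem 1 of norm-ranging LSH, analytic form: the total query cost
`f(n) = n^α + (∑_{j ∈ J_n} n^{(1-α)ρ_j}) log n` of norm-ranging LSH is asymptotically
negligible with respect to the SIMPLE-LSH query cost `n^ρ log n`. -/
theorem rangeLSH_beats_simpleLSH {ι : Type*} (ρ ρstar α β : ℝ)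
    (hρstar0 : 0 < ρstar) (hρstarρ : ρstar < ρ) (hρ1 : ρ < 1)
    (hα0 : 0 < α) (hαρ : α < ρ) (hαρstar : α < (ρ - ρstar) / (1 - ρstar))
    (hβ0 : 0 < β) (hβ : β < α * ρ)
    (J : ℕ → Finset ι) (g : ℕ → ι → ℝ)
    (hcard : ∀ n : ℕ, 2 ≤ n → ((J n).card : ℝ) ≤ (n : ℝ) ^ α)
    (hg0 : ∀ n : ℕ, 2 ≤ n → ∀ j ∈ J n, 0 ≤ g n j)
    (hgρ : ∀ n : ℕ, 2 ≤ n → ∀ j ∈ J n, g n j ≤ ρ)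
    (hbig : ∀ n : ℕ, 2 ≤ n →
      (((J n).filter (fun j => ρstar < g n j)).card : ℝ) ≤ (n : ℝ) ^ β)
    (f : ℕ → ℝ)
    (hf : ∀ n : ℕ, 2 ≤ n →
      f n = (n : ℝ) ^ α + (∑ j ∈ J n, (n : ℝ) ^ ((1 - α) * g n j)) * Real.log n) :
    Tendsto (fun n : ℕ => f n / ((n : ℝ) ^ ρ * Real.log n)) atTop (nhds 0) := by
  have hα1 : α < 1 := hαρ.trans hρ1
  have hc1 : β - α * ρ < 0 := by linarith
  have hc0 : α - ρ < 0 := by linarith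
  have hc2 : α + (1 - α) * ρstar - ρ < 0 := by
    have h1 : (0:ℝ) < 1 - ρstar := by linarith
    have h2 := (lt_div_iff₀ h1).mp hαρstar
    nlinarith
  -- the bounding function
  set h : ℕ → ℝ := fun n => (n : ℝ) ^ (α - ρ) / Real.log 2 +
      ((n : ℝ) ^ (β - α * ρ) + (n : ℝ) ^ (α + (1 - α) * ρstar - ρ)) with hh
  have htend : Tendsto h atTop (nhds 0) := by
    have t0 := (rangeLSH_aux_rpow_tendsto _ hc0).div_const (Real.log 2)
    have t1 := rangeLSH_aux_rpow_tendsto _ hc1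
    have t2 := rangeLSH_aux_rpow_tendsto _ hc2
    have := t0.add (t1.add t2)
    simpa using this
  apply squeeze_zero' (g := h)
  · filter_upwards [eventually_ge_atTop 2] with n hn
    have hN0 : (0:ℝ) < (n:ℝ) := by positivity
    have hN1 : (1:ℝ) < (n:ℝ) := by exact_mod_cast hn.trans_lt' one_lt_two
    have hlog : 0 < Real.log n := Real.log_pos hN1
    rw [hf n hn]
    have hfn : 0 ≤ (n : ℝ) ^ α + (∑ j ∈ J n, (n : ℝ) ^ ((1 - α) * g n j)) * Real.log n := by
      have : 0 ≤ ∑ j ∈ J n, (n : ℝ) ^ ((1 - α) * g n j) :=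
        Finset.sum_nonneg fun j _ => (Real.rpow_pos_of_pos hN0 _).le
      positivity
    positivity
  · filter_upwards [eventually_ge_atTop 2] with n hn
    have hN0 : (0:ℝ) < (n:ℝ) := by positivity
    have hN2 : (2:ℝ) ≤ (n:ℝ) := by exact_mod_cast hn
    have hN1 : (1:ℝ) ≤ (n:ℝ) := by linarith
    have hlog2 : (0:ℝ) < Real.log 2 := Real.log_pos one_lt_two
    have hlogle : Real.log 2 ≤ Real.log n := Real.log_le_log two_pos hN2
    have hlog : 0 < Real.log n := lt_of_lt_of_le hlog2 hlogle
    have hNρ : (0:ℝ) < (n:ℝ) ^ ρ := Real.rpow_pos_of_pos hN0 _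
    set S := ∑ j ∈ J n, (n : ℝ) ^ ((1 - α) * g n j) with hS
    -- bound on S
    have hSle : S ≤ (n:ℝ) ^ (β + (1 - α) * ρ) + (n:ℝ) ^ (α + (1 - α) * ρstar) := by
      rw [hS, ← Finset.sum_filter_add_sum_filter_not (J n) (fun j => ρstar < g n j)]
      have hbig' : ∑ j ∈ (J n).filter (fun j => ρstar < g n j), (n : ℝ) ^ ((1 - α) * g n j)
          ≤ (n:ℝ) ^ (β + (1 - α) * ρ) := by
        calc ∑ j ∈ (J n).filter (fun j => ρstar < g n j), (n : ℝ) ^ ((1 - α) * g n j)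
            ≤ ((J n).filter (fun j => ρstar < g n j)).card • ((n:ℝ) ^ ((1 - α) * ρ)) := by
              apply Finset.sum_le_card_nsmul
              intro j hj
              apply Real.rpow_le_rpow_of_exponent_le hN1
              have := hgρ n hn j (Finset.mem_filter.mp hj).1
              nlinarith
          _ = (((J n).filter (fun j => ρstar < g n j)).card : ℝ) * ((n:ℝ) ^ ((1 - α) * ρ)) := by
              rw [nsmul_eq_mul]
          _ ≤ (n:ℝ) ^ β * (n:ℝ) ^ ((1 - α) * ρ) := by
              apply mul_le_mul_of_nonneg_right (hbig n hn) (Real.rpow_pos_of_pos hN0 _).le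
          _ = (n:ℝ) ^ (β + (1 - α) * ρ) := (Real.rpow_add hN0 _ _).symm
      have hsmall' : ∑ j ∈ (J n).filter (fun j => ¬ ρstar < g n j), (n : ℝ) ^ ((1 - α) * g n j)
          ≤ (n:ℝ) ^ (α + (1 - α) * ρstar) := by
        calc ∑ j ∈ (J n).filter (fun j => ¬ ρstar < g n j), (n : ℝ) ^ ((1 - α) * g n j)
            ≤ ((J n).filter (fun j => ¬ ρstar < g n j)).card • ((n:ℝ) ^ ((1 - α) * ρstar)) := by
              apply Finset.sum_le_card_nsmul
              intro j hj
              apply Real.rpow_le_rpow_of_exponent_le hN1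
              have := (Finset.mem_filter.mp hj).2
              push_neg at this
              nlinarith
          _ = (((J n).filter (fun j => ¬ ρstar < g n j)).card : ℝ) * ((n:ℝ) ^ ((1 - α) * ρstar)) := by
              rw [nsmul_eq_mul]
          _ ≤ (n:ℝ) ^ α * (n:ℝ) ^ ((1 - α) * ρstar) := by
              apply mul_le_mul_of_nonneg_right _ (Real.rpow_pos_of_pos hN0 _).le
              calc (((J n).filter (fun j => ¬ ρstar < g n j)).card : ℝ)
                  ≤ ((J n).card : ℝ) := by
                    exact_mod_cast Finset.card_le_card (Finset.filter_subset _ _)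
                _ ≤ (n:ℝ) ^ α := hcard n hn
          _ = (n:ℝ) ^ (α + (1 - α) * ρstar) := (Real.rpow_add hN0 _ _).symm
      linarith
    rw [hf n hn, add_div]
    have term1 : (n:ℝ) ^ α / ((n:ℝ) ^ ρ * Real.log n) ≤ (n:ℝ) ^ (α - ρ) / Real.log 2 := by
      have : (n:ℝ) ^ α / ((n:ℝ) ^ ρ * Real.log n) ≤ (n:ℝ) ^ α / ((n:ℝ) ^ ρ * Real.log 2) := by
        apply div_le_div_of_nonneg_left (Real.rpow_pos_of_pos hN0 _).le
          (by positivity)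
        exact mul_le_mul_of_nonneg_left hlogle hNρ.le
      calc (n:ℝ) ^ α / ((n:ℝ) ^ ρ * Real.log n) ≤ (n:ℝ) ^ α / ((n:ℝ) ^ ρ * Real.log 2) := this
        _ = (n:ℝ) ^ (α - ρ) / Real.log 2 := by
            rw [Real.rpow_sub hN0, div_div]
    have term2 : S * Real.log n / ((n:ℝ) ^ ρ * Real.log n)
        ≤ (n:ℝ) ^ (β - α * ρ) + (n:ℝ) ^ (α + (1 - α) * ρstar - ρ) := by
      have e1 : S * Real.log n / ((n:ℝ) ^ ρ * Real.log n) = S / (n:ℝ) ^ ρ := by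
        rw [mul_comm ((n:ℝ) ^ ρ) (Real.log n), mul_comm S (Real.log n),
          mul_div_mul_left _ _ hlog.ne']
      rw [e1]
      calc S / (n:ℝ) ^ ρ
          ≤ ((n:ℝ) ^ (β + (1 - α) * ρ) + (n:ℝ) ^ (α + (1 - α) * ρstar)) / (n:ℝ) ^ ρ :=
            div_le_div_of_nonneg_right hSle hNρ.le |>.trans_eq rfl
        _ = (n:ℝ) ^ (β + (1 - α) * ρ - ρ) + (n:ℝ) ^ (α + (1 - α) * ρstar - ρ) := by
            rw [add_div, ← Real.rpow_sub hN0, ← Real.rpow_sub hN0]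
        _ = (n:ℝ) ^ (β - α * ρ) + (n:ℝ) ^ (α + (1 - α) * ρstar - ρ) := by
            ring_nf
    rw [hh]
    have := add_le_add term1 term2
    linarith
  · exact htend
end

section
/- Fix r > 0 and define F_r(d) = 1 − 2Φ(−r/d) − (2d/(√(2π)·r))·(1 − exp(−(r/d)²/2)) for d > 0, where Φ(x) = ∫_{−∞}^{x} (1/√(2π))·exp(−t²/2) dt is the standard normal cumulative distribution function. Then F_r is strictly decreasing on (0, ∞), and 0 < F_r(d) < 1 for every d > 0. -/
open MeasureTheory

/-- The standard normal cumulative distribution function. -/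
noncomputable def Phi (x : ℝ) : ℝ :=
  ∫ t in Set.Iic x, (1 / Real.sqrt (2 * Real.pi)) * Real.exp (-t ^ 2 / 2)

/-- The collision probability of the L2 LSH `h(x) = ⌊(aᵀx + b)/r⌋` at distance `d`. -/
noncomputable def Fcol (r d : ℝ) : ℝ :=
  1 - 2 * Phi (-r / d) - (2 * d / (Real.sqrt (2 * Real.pi) * r)) *
    (1 - Real.exp (-(r / d) ^ 2 / 2))

noncomputable def phi (t : ℝ) : ℝ := (1 / Real.sqrt (2 * Real.pi)) * Real.exp (-t ^ 2 / 2)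

lemma phi_cont : Continuous phi := by
  unfold phi
  fun_prop

lemma phi_pos (t : ℝ) : 0 < phi t := by
  unfold phi
  positivity

lemma phi_integrable : Integrable phi := by
  have h := (integrable_exp_neg_mul_sq (by norm_num : (0:ℝ) < 1/2)).const_mul
    (1 / Real.sqrt (2 * Real.pi))
  convert h using 2 with t
  unfold phi
  ring_nf

lemma phi_intervalIntegrable (a b : ℝ) : IntervalIntegrable phi volume a b :=
  (phi_cont.intervalIntegrable a b)

lemma integral_phi : ∫ t, phi t = 1 := by
  have h : ∫ t : ℝ, Real.exp (-(1/2) * t ^ 2) = Real.sqrt (Real.pi / (1/2)) :=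
    integral_gaussian (1/2)
  have h2 : ∫ t, phi t = (1 / Real.sqrt (2 * Real.pi)) * ∫ t : ℝ, Real.exp (-(1/2) * t ^ 2) := by
    rw [← integral_const_mul]
    unfold phi
    congr 1 with t
    ring_nf
  rw [h2, h]
  have hpi : (0:ℝ) < Real.pi := Real.pi_pos
  rw [show Real.pi / (1/2 : ℝ) = 2 * Real.pi by ring]
  rw [one_div, inv_mul_cancel₀ (by positivity)]

lemma Phi_eq (x : ℝ) : Phi x = ∫ t in Set.Iic x, phi t := rfl

lemma Phi_zero : Phi 0 = 1 / 2 := by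
  have hsplit : Phi 0 + ∫ t in Set.Ioi (0:ℝ), phi t = 1 := by
    rw [Phi_eq, intervalIntegral.integral_Iic_add_Ioi phi_integrable.integrableOn
      phi_integrable.integrableOn, integral_phi]
  have hsym : (∫ t in Set.Ioi (0:ℝ), phi t) = Phi 0 := by
    rw [Phi_eq, show Set.Ioi (0:ℝ) = Set.Ioi (-(0:ℝ)) by norm_num,
      ← integral_comp_neg_Iic (0:ℝ) phi]
    congr 1 with t
    unfold phi
    ring_nf
  rw [hsym] at hsplit
  linarith

lemma Phi_pos (x : ℝ) : 0 < Phi x := by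
  have h1 : Phi x - Phi (x - 1) = ∫ t in (x-1)..x, phi t :=
    intervalIntegral.integral_Iic_sub_Iic phi_integrable.integrableOn
      phi_integrable.integrableOn
  have h2 : 0 < ∫ t in (x-1)..x, phi t :=
    intervalIntegral.intervalIntegral_pos_of_pos_on (phi_intervalIntegrable _ _)
      (fun t _ => phi_pos t) (by linarith)
  have h3 : 0 ≤ Phi (x - 1) := setIntegral_nonneg measurableSet_Iic
    (fun t _ => (phi_pos t).le)
  linarith

lemma Phi_hasDerivAt (x : ℝ) : HasDerivAt Phi (phi x) x := by
  have key : ∀ y : ℝ, Phi y = Phi 0 + ∫ t in (0:ℝ)..y, phi t := by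
    intro y
    have := intervalIntegral.integral_Iic_sub_Iic (a := (0:ℝ)) (b := y)
      phi_integrable.integrableOn phi_integrable.integrableOn
    rw [← Phi_eq, ← Phi_eq] at this
    linarith
  have hd : HasDerivAt (fun y => Phi 0 + ∫ t in (0:ℝ)..y, phi t) (phi x) x := by
    refine HasDerivAt.const_add _ ?_
    exact intervalIntegral.integral_hasDerivAt_right (phi_intervalIntegrable 0 x)
      (phi_cont.stronglyMeasurable.stronglyMeasurableAtFilter) phi_cont.continuousAt
  exact hd.congr_deriv rfl |>.congr_of_eventuallyEq (Filter.Eventually.of_forall fun y => (key y))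

-- antiderivative of t * exp(-t^2/2)
lemma integral_t_exp (s : ℝ) :
    (∫ t in (0:ℝ)..s, t * Real.exp (-t ^ 2 / 2)) = 1 - Real.exp (-s ^ 2 / 2) := by
  have : ∀ t : ℝ, HasDerivAt (fun u : ℝ => -Real.exp (-u ^ 2 / 2)) (t * Real.exp (-t ^ 2 / 2)) t := by
    intro t
    have h1 : HasDerivAt (fun u : ℝ => -u ^ 2 / 2) (-t) t := by
      have := ((hasDerivAt_pow 2 t).neg).div_const 2
      simpa using this.congr_deriv (by ring)
    have := (h1.exp).neg
    replace this : HasDerivAt (fun u : ℝ => -Real.exp (-u ^ 2 / 2)) _ t := this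
    convert this using 1
    ring
  rw [intervalIntegral.integral_eq_sub_of_hasDerivAt (fun t _ => this t)
    ((Continuous.mul continuous_id (by fun_prop)).intervalIntegrable 0 s)]
  simp [Real.exp_zero]
  ring


lemma phi_interval_eq (a b : ℝ) :
    (∫ t in a..b, phi t) = (1 / Real.sqrt (2 * Real.pi)) * ∫ t in a..b, Real.exp (-t^2/2) := by
  rw [← intervalIntegral.integral_const_mul]
  rfl

lemma Phi_neg_eq (s : ℝ) : Phi (-s) = 1/2 - ∫ t in (0:ℝ)..s, phi t := by
  have h : Phi 0 - Phi (-s) = ∫ t in (-s)..0, phi t :=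
    intervalIntegral.integral_Iic_sub_Iic phi_integrable.integrableOn
      phi_integrable.integrableOn
  have hev : (∫ t in (0:ℝ)..s, phi t) = ∫ t in (-s)..(0:ℝ), phi t := by
    have hf : (fun x : ℝ => phi (-x)) = phi := funext fun x => by unfold phi; rw [neg_sq]
    have h2 := intervalIntegral.integral_comp_neg (a := (0:ℝ)) (b := s) phi
    rw [hf] at h2
    simpa using h2
  rw [Phi_zero] at h
  rw [hev]
  linarith

lemma Fcol_eq_integral (r : ℝ) (hr : 0 < r) {d : ℝ} (_hd : 0 < d) :
    Fcol r d = (2 / Real.sqrt (2 * Real.pi)) *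
      ∫ t in (0:ℝ)..(r/d), (1 - t * (d/r)) * Real.exp (-t^2/2) := by
  have hc : (0:ℝ) < Real.sqrt (2 * Real.pi) := Real.sqrt_pos.2 (by positivity)
  have c1 : Continuous fun t : ℝ => Real.exp (-t^2/2) := by fun_prop
  have c2 : Continuous fun t : ℝ => d/r * (t * Real.exp (-t^2/2)) := by fun_prop
  have hsub : (∫ t in (0:ℝ)..(r/d), (1 - t * (d/r)) * Real.exp (-t^2/2))
      = (∫ t in (0:ℝ)..(r/d), Real.exp (-t^2/2))
        - (d/r) * ∫ t in (0:ℝ)..(r/d), t * Real.exp (-t^2/2) := by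
    rw [← intervalIntegral.integral_const_mul, ← intervalIntegral.integral_sub
      (c1.intervalIntegrable 0 (r/d)) (c2.intervalIntegrable 0 (r/d))]
    congr 1 with t
    ring
  have hPn : Phi (-r/d) = 1/2 - ∫ t in (0:ℝ)..(r/d), phi t := by
    rw [neg_div]; exact Phi_neg_eq (r/d)
  rw [Fcol, hPn, phi_interval_eq, hsub, ← integral_t_exp (r/d)]
  field_simp
  ring

lemma Fcol_hasDerivAt (r : ℝ) (hr : 0 < r) {d : ℝ} (hd : 0 < d) :
    HasDerivAt (Fcol r)
      (-(2 / (Real.sqrt (2 * Real.pi) * r)) * (1 - Real.exp (-(r/d)^2/2))) d := by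
  have hc : (0:ℝ) < Real.sqrt (2 * Real.pi) := Real.sqrt_pos.2 (by positivity)
  have hd0 : d ≠ 0 := ne_of_gt hd
  set c := Real.sqrt (2 * Real.pi) with hcdef
  -- derivative of -r/x
  have h1 : HasDerivAt (fun x : ℝ => -r / x) (r / d^2) d := by
    have := (hasDerivAt_inv hd0).const_mul (-r)
    have heq : (fun x : ℝ => -r * x⁻¹) = fun x => -r / x := by
      funext x; rw [div_eq_mul_inv]
    rw [heq] at this
    refine this.congr_deriv ?_
    ring
  -- derivative of Phi (-r/x)
  have h2 : HasDerivAt (fun x : ℝ => Phi (-r / x)) (phi (-r/d) * (r/d^2)) d :=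
    (Phi_hasDerivAt (-r/d)).comp d h1
  -- derivative of -(r/x)^2/2
  have h3 : HasDerivAt (fun x : ℝ => -(r/x)^2/2) (r^2/d^3) d := by
    have hb : HasDerivAt (fun x : ℝ => (x⁻¹)^2) (2 * (d⁻¹)^1 * (-(d^2)⁻¹)) d :=
      (hasDerivAt_inv hd0).pow 2
    have := hb.const_mul (-(r^2)/2)
    have heq : (fun x : ℝ => -(r^2)/2 * (x⁻¹)^2) = fun x => -(r/x)^2/2 := by
      funext x; field_simp
    rw [heq] at this
    refine this.congr_deriv ?_
    ring
  have h4 : HasDerivAt (fun x : ℝ => Real.exp (-(r/x)^2/2))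
      (Real.exp (-(r/d)^2/2) * (r^2/d^3)) d := by
    exact h3.exp
  -- derivative of (2x/(c r)) * (1 - exp(-(r/x)^2/2))
  have hf : HasDerivAt (fun x : ℝ => 2 * x / (c * r)) (2 / (c * r)) d := by
    have h := ((hasDerivAt_id d).const_mul (2:ℝ)).div_const (c * r)
    simpa using h
  have hg : HasDerivAt (fun x : ℝ => 1 - Real.exp (-(r/x)^2/2))
      (-(Real.exp (-(r/d)^2/2) * (r^2/d^3))) d := h4.const_sub 1
  have h5 := hf.mul hg
  -- total
  have h6 := ((h2.const_mul 2).const_sub 1).sub h5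
  have heqF : (fun x : ℝ => 1 - 2 * Phi (-r / x)
      - 2 * x / (c * r) * (1 - Real.exp (-(r/x)^2/2))) = Fcol r := by
    funext x; rw [Fcol]
  replace h6 : HasDerivAt (fun x : ℝ => 1 - 2 * Phi (-r / x)
      - 2 * x / (c * r) * (1 - Real.exp (-(r/x)^2/2))) _ d := h6
  rw [heqF] at h6
  convert h6 using 1
  have hphi : phi (-r/d) = 1/c * Real.exp (-(r/d)^2/2) := by
    unfold phi; rw [hcdef]; congr 2; ring
  rw [hphi]
  field_simp
  ring

/-- For fixed `r > 0`, the collision probability `F_r` is strictly decreasing on `(0, ∞)`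
and takes values in `(0, 1)` there. -/
theorem Fcol_strictAnti_and_mem_Ioo (r : ℝ) (hr : 0 < r) :
    StrictAntiOn (Fcol r) (Set.Ioi 0) ∧ ∀ d : ℝ, 0 < d → 0 < Fcol r d ∧ Fcol r d < 1 := by
  have hc : (0:ℝ) < Real.sqrt (2 * Real.pi) := Real.sqrt_pos.2 (by positivity)
  constructor
  · apply strictAntiOn_of_deriv_neg (convex_Ioi 0)
    · exact fun x hx => ((Fcol_hasDerivAt r hr hx).continuousAt).continuousWithinAt
    · intro x hx
      rw [interior_Ioi] at hx
      rw [(Fcol_hasDerivAt r hr hx).deriv]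
      have hE : Real.exp (-(r/x)^2/2) < 1 := by
        rw [← Real.exp_zero]
        apply Real.exp_lt_exp.2
        have : (0:ℝ) < (r/x)^2 := pow_pos (div_pos hr hx) 2
        linarith
      have : (0:ℝ) < 2 / (Real.sqrt (2 * Real.pi) * r) := by positivity
      nlinarith
  · intro d hd
    constructor
    · rw [Fcol_eq_integral r hr hd]
      have hpos : 0 < ∫ t in (0:ℝ)..(r/d), (1 - t * (d/r)) * Real.exp (-t^2/2) := by
        apply intervalIntegral.intervalIntegral_pos_of_pos_on
        · exact ((continuous_const.sub (continuous_id.mul continuous_const)).mul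
            (Real.continuous_exp.comp (by fun_prop))).intervalIntegrable 0 (r/d)
        · intro t ht
          have h1 : t * (d/r) < 1 := by
            have := ht.2
            calc t * (d/r) < (r/d) * (d/r) := by
                  apply mul_lt_mul_of_pos_right ht.2
                  positivity
              _ = 1 := by field_simp
          have h2 : (0:ℝ) < Real.exp (-t^2/2) := Real.exp_pos _
          nlinarith
        · positivity
      exact mul_pos (by positivity) hpos
    · have hP : 0 < Phi (-r/d) := Phi_pos _
      have hE : Real.exp (-(r/d)^2/2) < 1 := by
        rw [← Real.exp_zero]
        apply Real.exp_lt_exp.2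
        have : (0:ℝ) < (r/d)^2 := pow_pos (div_pos hr hd) 2
        linarith
      have hcoef : (0:ℝ) < 2 * d / (Real.sqrt (2 * Real.pi) * r) := by positivity
      rw [Fcol]
      nlinarith [mul_pos hcoef (by linarith : (0:ℝ) < 1 - Real.exp (-(r/d)^2/2))]
end
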